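/- Let T be a tree and D a set of guards. If (T, D) has an arena X with ctd(X) = t, then t_T(D) ≤ t. -/

import Mathlib

/-- Attacker wins within `t` turns in the mobile domination game. -/
def AttackerWinsIn {V : Type*} [DecidableEq V] (G : SimpleGraph V) :
    ℕ → Finset V → Prop
  | 0, _ => False
  | (t + 1), D => ∃ v, v ∉ D ∧
      ∀ u ∈ D, G.Adj u v → AttackerWinsIn G t (insert v (D.erase u))

/-- `t_G(D)`, the minimum number of turns in which Attacker can force a win;
`⊤` iff `D` is an eternal dominating set. -/
noncomputable def gameValue {V : Type*} [DecidableEq V] (G : SimpleGraph V)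
    (D : Finset V) : ℕ∞ :=
  sInf {n : ℕ∞ | ∃ t : ℕ, n = (t : ℕ∞) ∧ AttackerWinsIn G t D}

/-- `TreedepthLE G k` : there is a rooted forest of height at most `k` (encoded by
assigning to each vertex its root-to-vertex path, ancestor‑descendant = prefix) in
which the endpoints of every edge of `G` are in ancestor-descendant relation. -/
def TreedepthLE {W : Type*} (G : SimpleGraph W) (k : ℕ) : Prop :=
  ∃ ι : W → List ℕ, Function.Injective ι ∧
    (∀ v, 1 ≤ (ι v).length ∧ (ι v).length ≤ k) ∧
    (∀ u v, G.Adj u v → ((ι u <+: ι v) ∨ (ι v <+: ι u)))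

/-- The treedepth of a graph: the minimum height of such a rooted forest. -/
noncomputable def treedepth {W : Type*} (G : SimpleGraph W) : ℕ :=
  sInf {k | TreedepthLE G k}

/-- `X` is an arena of `(T, D)` : a subtree (nonempty connected induced subgraph)
of `T` such that (1) `X ∩ D` and `X \ D` are independent; (2) every guarded vertex
of `X` has degree exactly 2 in `X`; (3) no unguarded vertex of `X` has a guarded
neighbor outside `X`. -/
def IsArena {V : Type*} [DecidableEq V] (T : SimpleGraph V) [DecidableRel T.Adj]
    (D X : Finset V) : Prop :=
  (T.induce (X : Set V)).Connected ∧
  (∀ u ∈ X, ∀ v ∈ X, u ∈ D → v ∈ D → ¬ T.Adj u v) ∧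
  (∀ u ∈ X, ∀ v ∈ X, u ∉ D → v ∉ D → ¬ T.Adj u v) ∧
  (∀ u ∈ X, u ∈ D → (X.filter fun w => T.Adj u w).card = 2) ∧
  (∀ v ∈ X, v ∉ D → ∀ u, T.Adj v u → u ∈ D → u ∈ X)

/-- The contracted tree of an arena `X` : on the unguarded vertices of `X`, each
guarded vertex of `X` is replaced by an edge between its two neighbors in `X`. -/
def contractedTree {V : Type*} [DecidableEq V] (T : SimpleGraph V)
    (D X : Finset V) : SimpleGraph {v // v ∈ X \ D} :=
  SimpleGraph.fromRel fun a b =>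
    T.Adj a.1 b.1 ∨ ∃ g ∈ X ∩ D, T.Adj a.1 g ∧ T.Adj g b.1

/-- The contracted treedepth of an arena. -/
noncomputable def ctd {V : Type*} [DecidableEq V] (T : SimpleGraph V)
    (D X : Finset V) : ℕ :=
  treedepth (contractedTree T D X)

/- ----------------- auxiliary lemmas ----------------- -/

lemma aux_prefix_of_prefix {l₁ l₂ l₃ : List ℕ} (h1 : l₁ <+: l₃) (h2 : l₂ <+: l₃)
    (h : l₁.length ≤ l₂.length) : l₁ <+: l₂ := by
  have e1 := List.prefix_iff_eq_take.mp h1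
  have e2 := List.prefix_iff_eq_take.mp h2
  have : l₁ = l₂.take l₁.length := by
    rw [e2, List.take_take, min_eq_left h, ← e1]
  rw [this]
  exact List.take_prefix _ _

lemma aux_tail_prefix {l₁ l₂ : List ℕ} (h : l₁ <+: l₂) : l₁.tail <+: l₂.tail := by
  obtain ⟨s, rfl⟩ := h
  cases l₁ with
  | nil => simp
  | cons a r => exact ⟨s, rfl⟩

lemma aux_replicate_prefix {m n : ℕ} (h : m ≤ n) :
    List.replicate m 0 <+: List.replicate n (0 : ℕ) :=
  ⟨List.replicate (n - m) 0, by rw [← List.replicate_add, Nat.add_sub_cancel' h]⟩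

lemma exists_treedepthLE {W : Type*} [Fintype W] [DecidableEq W] (G : SimpleGraph W) :
    TreedepthLE G (Fintype.card W) := by
  classical
  let e := Fintype.equivFin W
  refine ⟨fun z => List.replicate ((e z : ℕ) + 1) 0, ?_, ?_, ?_⟩
  · intro a b hab
    have hlen := congrArg List.length hab
    simp only [List.length_replicate] at hlen
    exact e.injective (Fin.ext (by omega))
  · intro v
    simp only [List.length_replicate]
    exact ⟨by omega, by have := (e v).is_lt; omega⟩
  · intro a b _
    rcases le_total ((e a : ℕ) + 1) ((e b : ℕ) + 1) with h | h
    · exact Or.inl (aux_replicate_prefix h)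
    · exact Or.inr (aux_replicate_prefix h)

lemma reach_walk {V : Type*} {T : SimpleGraph V} {P : V → Prop} {a b : V}
    (h : Relation.ReflTransGen (fun x y => T.Adj x y ∧ P x ∧ P y) a b) :
    ∃ p : T.Walk a b, ∀ x ∈ p.support, x = a ∨ P x := by
  induction h with
  | refl => exact ⟨SimpleGraph.Walk.nil, by simp⟩
  | @tail b c h1 h2 ih =>
    obtain ⟨p, hp⟩ := ih
    refine ⟨p.concat h2.1, ?_⟩
    intro x hx
    rw [SimpleGraph.Walk.support_concat, List.mem_append] at hx
    rcases hx with hx | hx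
    · exact hp x hx
    · simp only [List.mem_singleton] at hx
      exact Or.inr (hx ▸ h2.2.2)

lemma tree_nbr_eq {V : Type*} [DecidableEq V] {T : SimpleGraph V} (hT : T.IsTree) {v a b : V}
    (ha : T.Adj v a) (hb : T.Adj v b) (p : T.Walk a b) (hv : v ∉ p.support) : a = b := by
  by_contra hne
  have hq : v ∉ p.toPath.1.support := fun h => hv (SimpleGraph.Walk.support_toPath_subset p h)
  have hp1 : (SimpleGraph.Walk.cons ha p.toPath.1).IsPath := p.toPath.2.cons hq
  have hp2 : (SimpleGraph.Walk.cons hb SimpleGraph.Walk.nil).IsPath := by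
    simp [SimpleGraph.Walk.isPath_def, hb.ne]
  have heq := hT.IsAcyclic.path_unique ⟨_, hp1⟩ ⟨_, hp2⟩
  have hlen := congrArg (fun q : T.Path v b => q.1.length) heq
  simp only [SimpleGraph.Walk.length_cons, SimpleGraph.Walk.length_nil] at hlen
  exact hne (SimpleGraph.Walk.eq_of_length_eq_zero (p := p.toPath.1) (by omega))

/-- The connectivity-free invariant maintained by Attacker. -/
def Good {V : Type*} [DecidableEq V] (T : SimpleGraph V) [DecidableRel T.Adj]
    (D X : Finset V) (t : ℕ) : Prop :=
  (∀ u ∈ X, ∀ v ∈ X, u ∈ D → v ∈ D → ¬ T.Adj u v) ∧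
  (∀ u ∈ X, ∀ v ∈ X, u ∉ D → v ∉ D → ¬ T.Adj u v) ∧
  (∀ u ∈ X, u ∈ D → (X.filter fun w => T.Adj u w).card = 2) ∧
  (∀ v ∈ X, v ∉ D → ∀ u, T.Adj v u → u ∈ D → u ∈ X) ∧
  (X \ D).Nonempty ∧
  TreedepthLE (contractedTree T D X) t

lemma good_wins {V : Type*} [Fintype V] [DecidableEq V] (T : SimpleGraph V)
    [DecidableRel T.Adj] (hT : T.IsTree) :
    ∀ t (D X : Finset V), Good T D X t → AttackerWinsIn T t D := by
  intro t
  induction t with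
  | zero =>
    intro D X hG
    obtain ⟨z, hz⟩ := hG.2.2.2.2.1
    obtain ⟨ι, hinj, hlen, hcomp⟩ := hG.2.2.2.2.2
    have h1 := (hlen ⟨z, hz⟩).1
    have h2 := (hlen ⟨z, hz⟩).2
    exact absurd h1 (by omega)
  | succ t ih =>
    intro D X hG
    classical
    obtain ⟨h1, h2, h3, h5, hne, ι, hinj, hlen, hcomp⟩ := hG
    -- choose an unguarded vertex with minimal label length
    have hWne : (Finset.univ : Finset {z // z ∈ X \ D}).Nonempty := by
      obtain ⟨z, hz⟩ := hne
      exact ⟨⟨z, hz⟩, Finset.mem_univ _⟩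
    obtain ⟨vW, -, hmin⟩ := Finset.exists_min_image Finset.univ (fun z => (ι z).length) hWne
    have hminall : ∀ z, (ι vW).length ≤ (ι z).length := fun z => hmin z (Finset.mem_univ z)
    obtain ⟨hv1X, hv1D⟩ := Finset.mem_sdiff.mp vW.2
    set v1 := vW.1 with hv1def
    show ∃ v, v ∉ D ∧ ∀ u ∈ D, T.Adj u v → AttackerWinsIn T t (insert v (D.erase u))
    refine ⟨v1, hv1D, ?_⟩
    intro u hu hadj
    have huX : u ∈ X := h5 v1 hv1X hv1D u hadj.symm hu
    -- the other neighbor w of the moved guard u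
    obtain ⟨a0, b0, hab0, hfil0⟩ := Finset.card_eq_two.mp (h3 u huX hu)
    have ha0f : a0 ∈ X.filter (fun w => T.Adj u w) := by rw [hfil0]; simp
    have hb0f : b0 ∈ X.filter (fun w => T.Adj u w) := by rw [hfil0]; simp
    have hv1f : v1 ∈ X.filter (fun w => T.Adj u w) := Finset.mem_filter.mpr ⟨hv1X, hadj⟩
    have hw : ∃ w, w ∈ X ∧ T.Adj u w ∧ w ≠ v1 := by
      rw [hfil0] at hv1f
      rcases Finset.mem_insert.mp hv1f with h | h
      · obtain ⟨hbX, hub⟩ := Finset.mem_filter.mp hb0f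
        exact ⟨b0, hbX, hub, fun e => hab0 (h ▸ e ▸ rfl)⟩
      · have h' : v1 = b0 := Finset.mem_singleton.mp h
        obtain ⟨haX, hua⟩ := Finset.mem_filter.mp ha0f
        exact ⟨a0, haX, hua, fun e => hab0 (e ▸ h' ▸ rfl)⟩
    obtain ⟨w, hwX, huw, hwv⟩ := hw
    have hwD : w ∉ D := fun hD => h1 u huX w hwX hu hD huw
    have hwu : w ≠ u := huw.ne'
    -- the new arena: component of w in X minus v1 and u
    set SP : V → Prop := fun z => z ∈ X ∧ z ≠ v1 ∧ z ≠ u with hSPdef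
    set R : V → V → Prop := fun a b => T.Adj a b ∧ SP a ∧ SP b with hRdef
    set X' : Finset V := X.filter (fun z => SP z ∧ Relation.ReflTransGen R w z) with hX'def
    set D' : Finset V := insert v1 (D.erase u) with hD'def
    have hwSP : SP w := ⟨hwX, hwv, hwu⟩
    have hX'X : ∀ z ∈ X', z ∈ X ∧ z ≠ v1 ∧ z ≠ u ∧ Relation.ReflTransGen R w z := by
      intro z hz
      obtain ⟨hz1, hz2, hz3⟩ := Finset.mem_filter.mp hz
      exact ⟨hz1, hz2.2.1, hz2.2.2, hz3⟩
    have hmemX' : ∀ z, z ∈ X → z ≠ v1 → z ≠ u → Relation.ReflTransGen R w z → z ∈ X' := by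
      intro z hz h1' h2' h3'
      exact Finset.mem_filter.mpr ⟨hz, ⟨hz, h1', h2'⟩, h3'⟩
    have hD'mem : ∀ z, z ∈ D' ↔ z = v1 ∨ (z ∈ D ∧ z ≠ u) := by
      intro z
      simp only [hD'def, Finset.mem_insert, Finset.mem_erase]
      tauto
    have hXD' : ∀ z ∈ X', z ∉ D' → z ∉ D := by
      intro z hz hzD' hzD
      obtain ⟨-, -, hzu, -⟩ := hX'X z hz
      exact hzD' ((hD'mem z).mpr (Or.inr ⟨hzD, hzu⟩))
    have hX'D' : ∀ z ∈ X', z ∈ D' → z ∈ D ∧ z ≠ u := by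
      intro z hz hzD'
      rcases (hD'mem z).mp hzD' with h | h
      · exact absurd h (hX'X z hz).2.1
      · exact h
    -- no vertex of X' that is a guard (other than u) is adjacent to v1
    have hnoadj : ∀ p ∈ X', p ∈ D → p ≠ u → ¬ T.Adj p v1 := by
      intro p hp hpD hpu hadj'
      obtain ⟨hpX, hpv, -, hpr⟩ := hX'X p hp
      obtain ⟨q, hq⟩ := reach_walk hpr
      have hvsup : v1 ∉ (SimpleGraph.Walk.cons huw q).support := by
        rw [SimpleGraph.Walk.support_cons]
        intro hv
        rcases List.mem_cons.mp hv with h | h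
        · exact hv1D (h ▸ hu)
        · rcases hq _ h with h' | h'
          · exact hwv h'.symm
          · exact h'.2.1 rfl
      exact hpu (tree_nbr_eq hT hadj.symm hadj'.symm (SimpleGraph.Walk.cons huw q) hvsup).symm
    -- contracted reachability and the prefix property
    set C : V → V → Prop := fun a b => a ∈ X ∧ a ∉ D ∧ b ∈ X ∧ b ∉ D ∧ a ≠ b ∧
      ∃ g, g ∈ X ∧ g ∈ D ∧ T.Adj a g ∧ T.Adj g b with hCdef
    have hCadj : ∀ a b (ha : a ∈ X \ D) (hb : b ∈ X \ D), C a b →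
        (contractedTree T D X).Adj ⟨a, ha⟩ ⟨b, hb⟩ := by
      rintro a b ha hb ⟨-, -, -, -, hne', g, hgX, hgD, hg1, hg2⟩
      rw [contractedTree, SimpleGraph.fromRel_adj]
      exact ⟨fun e => hne' (congrArg Subtype.val e),
        Or.inl (Or.inr ⟨g, Finset.mem_inter.mpr ⟨hgX, hgD⟩, hg1, hg2⟩)⟩
    have halt : ∀ z, Relation.ReflTransGen R w z →
        (z ∉ D → Relation.ReflTransGen C w z) ∧
        (z ∈ D → ∃ y, y ∈ X ∧ y ∉ D ∧ Relation.ReflTransGen C w y ∧ T.Adj y z) := by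
      intro z hz
      induction hz with
      | refl => exact ⟨fun _ => Relation.ReflTransGen.refl, fun h => absurd h hwD⟩
      | @tail b c hwb hbc ihz =>
        obtain ⟨hadj', hbS, hcS⟩ := hbc
        have hbX : b ∈ X := hbS.1
        have hcX : c ∈ X := hcS.1
        by_cases hbD : b ∈ D <;> by_cases hcD : c ∈ D
        · exact absurd hadj' (h1 b hbX c hcX hbD hcD)
        · refine ⟨fun _ => ?_, fun h => absurd h hcD⟩
          obtain ⟨y, hyX, hyD, hyr, hyb⟩ := ihz.2 hbD
          by_cases hyc : y = c
          · exact hyc ▸ hyr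
          · exact hyr.tail ⟨hyX, hyD, hcX, hcD, hyc, b, hbX, hbD, hyb, hadj'⟩
        · exact ⟨fun h => absurd hcD h, fun _ => ⟨b, hbX, hbD, ihz.1 hbD, hadj'⟩⟩
        · exact absurd hadj' (h2 b hbX c hcX hbD hcD)
    have hpre : ∀ z, Relation.ReflTransGen C v1 z → ∀ hz : z ∈ X \ D, ι vW <+: ι ⟨z, hz⟩ := by
      intro z hz
      induction hz with
      | refl => intro hz'; exact List.prefix_rfl
      | @tail b c hvb hbc ihz =>
        intro hc
        have hbm : b ∈ X \ D := Finset.mem_sdiff.mpr ⟨hbc.1, hbc.2.1⟩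
        have hcm : c ∈ X \ D := Finset.mem_sdiff.mpr ⟨hbc.2.2.1, hbc.2.2.2.1⟩
        have hb := ihz hbm
        rcases hcomp _ _ (hCadj b c hbm hcm hbc) with hp | hp
        · exact hb.trans hp
        · exact aux_prefix_of_prefix hb hp (hminall ⟨c, hcm⟩)
    -- establish the new invariant
    have hsub : ∀ {z : V}, z ∈ X' \ D' → z ∈ X \ D := by
      intro z hz
      obtain ⟨hz1, hz2⟩ := Finset.mem_sdiff.mp hz
      exact Finset.mem_sdiff.mpr ⟨(hX'X z hz1).1, hXD' z hz1 hz2⟩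
    have hkey : ∀ (z : V) (hz : z ∈ X' \ D'), ι vW <+: ι ⟨z, hsub hz⟩ ∧
        (ι vW).length < (ι ⟨z, hsub hz⟩).length := by
      intro z hz
      obtain ⟨hz1, hz2⟩ := Finset.mem_sdiff.mp hz
      obtain ⟨hzX, hzv, hzu, hzr⟩ := hX'X z hz1
      have hzD : z ∉ D := hXD' z hz1 hz2
      have hrc : Relation.ReflTransGen C w z := (halt z hzr).1 hzD
      have hcw : C v1 w := ⟨hv1X, hv1D, hwX, hwD, Ne.symm hwv, u, huX, hu, hadj.symm, huw⟩
      have hp := hpre z (Relation.ReflTransGen.head hcw hrc) (hsub hz)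
      refine ⟨hp, lt_of_le_of_ne hp.length_le ?_⟩
      intro e
      exact hzv (congrArg Subtype.val (hinj (hp.eq_of_length e))).symm
    have hGood : Good T D' X' t := by
      refine ⟨?_, ?_, ?_, ?_, ?_, ?_⟩
      · intro p hp q hq hpD' hqD'
        exact h1 p (hX'X p hp).1 q (hX'X q hq).1 (hX'D' p hp hpD').1 (hX'D' q hq hqD').1
      · intro p hp q hq hpD' hqD'
        exact h2 p (hX'X p hp).1 q (hX'X q hq).1 (hXD' p hp hpD') (hXD' q hq hqD')
      · intro p hpX' hpD'
        obtain ⟨hpD, hpu⟩ := hX'D' p hpX' hpD'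
        obtain ⟨hpX, hpv, -, hpr⟩ := hX'X p hpX'
        obtain ⟨a, b, hab, hfil⟩ := Finset.card_eq_two.mp (h3 p hpX hpD)
        have haf : a ∈ X.filter (fun w => T.Adj p w) := by rw [hfil]; simp
        have hbf : b ∈ X.filter (fun w => T.Adj p w) := by rw [hfil]; simp
        obtain ⟨haX, hpa⟩ := Finset.mem_filter.mp haf
        obtain ⟨hbX, hpb⟩ := Finset.mem_filter.mp hbf
        have hnadj := hnoadj p hpX' hpD hpu
        have hstep : ∀ c, c ∈ X → T.Adj p c → c ∈ X' := by
          intro c hcX hpc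
          have hcD : c ∉ D := fun h => h1 p hpX c hcX hpD h hpc
          have hcv : c ≠ v1 := fun e => hnadj (e ▸ hpc)
          have hcu : c ≠ u := fun e => hcD (e ▸ hu)
          exact hmemX' c hcX hcv hcu (hpr.tail ⟨hpc, ⟨hpX, hpv, hpu⟩, ⟨hcX, hcv, hcu⟩⟩)
        have hfe : X'.filter (fun w => T.Adj p w) = {a, b} := by
          apply Finset.Subset.antisymm
          · intro z hz
            obtain ⟨hzX', hpz⟩ := Finset.mem_filter.mp hz
            have hzm : z ∈ X.filter (fun w => T.Adj p w) :=
              Finset.mem_filter.mpr ⟨(hX'X z hzX').1, hpz⟩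
            rwa [hfil] at hzm
          · intro z hz
            rcases Finset.mem_insert.mp hz with h | h
            · rw [h]; exact Finset.mem_filter.mpr ⟨hstep a haX hpa, hpa⟩
            · rw [Finset.mem_singleton.mp h]
              exact Finset.mem_filter.mpr ⟨hstep b hbX hpb, hpb⟩
        rw [hfe]
        exact Finset.card_pair hab
      · intro z hzX' hzD' p hzp hpD'
        obtain ⟨hzX, hzv, hzu, hzr⟩ := hX'X z hzX'
        have hzD : z ∉ D := hXD' z hzX' hzD'
        rcases (hD'mem p).mp hpD' with rfl | ⟨hpD, hpu⟩
        · exact absurd hzp (h2 z hzX v1 hv1X hzD hv1D)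
        · have hpX : p ∈ X := h5 z hzX hzD p hzp hpD
          have hpv : p ≠ v1 := fun e => hv1D (e ▸ hpD)
          exact hmemX' p hpX hpv hpu (hzr.tail ⟨hzp, ⟨hzX, hzv, hzu⟩, ⟨hpX, hpv, hpu⟩⟩)
      · refine ⟨w, Finset.mem_sdiff.mpr ⟨hmemX' w hwX hwv hwu Relation.ReflTransGen.refl, ?_⟩⟩
        intro h
        rcases (hD'mem w).mp h with h' | h'
        · exact hwv h'
        · exact hwD h'.1
      · refine ⟨fun z => (ι ⟨z.1, hsub z.2⟩).tail, ?_, ?_, ?_⟩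
        · intro z1 z2 he
          obtain ⟨s1, hs1⟩ := (hkey z1.1 z1.2).1
          obtain ⟨s2, hs2⟩ := (hkey z2.1 z2.2).1
          obtain ⟨c0, r0, hv0⟩ :=
            List.exists_cons_of_ne_nil (List.ne_nil_of_length_pos (hlen vW).1)
          rw [hv0] at hs1 hs2
          have ht1 : (ι ⟨z1.1, hsub z1.2⟩).tail = r0 ++ s1 := by rw [← hs1]; rfl
          have ht2 : (ι ⟨z2.1, hsub z2.2⟩).tail = r0 ++ s2 := by rw [← hs2]; rfl
          have hcat : r0 ++ s1 = r0 ++ s2 := by rw [← ht1, ← ht2]; exact he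
          have hss : s1 = s2 := List.append_cancel_left hcat
          have : ι ⟨z1.1, hsub z1.2⟩ = ι ⟨z2.1, hsub z2.2⟩ := by
            rw [← hs1, ← hs2, hss]
          exact Subtype.ext (Subtype.mk_eq_mk.mp (hinj this))
        · intro z
          have hk := (hkey z.1 z.2).2
          have hl1 := (hlen vW).1
          have hl2 := (hlen ⟨z.1, hsub z.2⟩).2
          rw [List.length_tail]
          constructor <;> omega
        · intro z1 z2 hadj'
          rw [contractedTree, SimpleGraph.fromRel_adj] at hadj'
          obtain ⟨hne', hrel⟩ := hadj'
          have hz1m := hsub z1.2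
          have hz2m := hsub z2.2
          have hz1D : z1.1 ∉ D := (Finset.mem_sdiff.mp hz1m).2
          have hz2D : z2.1 ∉ D := (Finset.mem_sdiff.mp hz2m).2
          have hz1X : z1.1 ∈ X := (Finset.mem_sdiff.mp hz1m).1
          have hz2X : z2.1 ∈ X := (Finset.mem_sdiff.mp hz2m).1
          have hold : (contractedTree T D X).Adj ⟨z1.1, hz1m⟩ ⟨z2.1, hz2m⟩ := by
            rw [contractedTree, SimpleGraph.fromRel_adj]
            refine ⟨fun e => hne' (Subtype.ext (Subtype.mk_eq_mk.mp e)), ?_⟩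
            rcases hrel with (hdir | ⟨g', hg', hg1, hg2⟩) | (hdir | ⟨g', hg', hg1, hg2⟩)
            · exact absurd hdir (h2 _ hz1X _ hz2X hz1D hz2D)
            · obtain ⟨hg'X', hg'D'⟩ := Finset.mem_inter.mp hg'
              exact Or.inl (Or.inr ⟨g', Finset.mem_inter.mpr
                ⟨(hX'X g' hg'X').1, (hX'D' g' hg'X' hg'D').1⟩, hg1, hg2⟩)
            · exact absurd hdir (h2 _ hz2X _ hz1X hz2D hz1D)
            · obtain ⟨hg'X', hg'D'⟩ := Finset.mem_inter.mp hg'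
              exact Or.inr (Or.inr ⟨g', Finset.mem_inter.mpr
                ⟨(hX'X g' hg'X').1, (hX'D' g' hg'X' hg'D').1⟩, hg1, hg2⟩)
          rcases hcomp _ _ hold with hp | hp
          · exact Or.inl (aux_tail_prefix hp)
          · exact Or.inr (aux_tail_prefix hp)
    exact ih D' X' hGood

/-- If `(T, D)` has an arena `X` with `ctd(X) = t`, then `t_T(D) ≤ t`. -/
theorem stmt8 {V : Type*} [Fintype V] [DecidableEq V] (T : SimpleGraph V)
    [DecidableRel T.Adj] (hT : T.IsTree) (D X : Finset V) (t : ℕ)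
    (hX : IsArena T D X) (hctd : ctd T D X = t) :
    gameValue T D ≤ (t : ℕ∞) := by
  classical
  obtain ⟨hconn, h1, h2, h3, h5⟩ := hX
  have hXne : X.Nonempty := by
    obtain ⟨⟨x, hx⟩⟩ := hconn.nonempty
    exact ⟨x, hx⟩
  have hne : (X \ D).Nonempty := by
    obtain ⟨x, hx⟩ := hXne
    by_cases hxD : x ∈ D
    · obtain ⟨a, b, hab, hfil⟩ := Finset.card_eq_two.mp (h3 x hx hxD)
      have haf : a ∈ X.filter (fun w => T.Adj x w) := by rw [hfil]; simp
      obtain ⟨haX, hxa⟩ := Finset.mem_filter.mp haf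
      have haD : a ∉ D := fun h => h1 x hx a haX hxD h hxa
      exact ⟨a, Finset.mem_sdiff.mpr ⟨haX, haD⟩⟩
    · exact ⟨x, Finset.mem_sdiff.mpr ⟨hx, hxD⟩⟩
  have htd : TreedepthLE (contractedTree T D X) t := by
    have hmem : treedepth (contractedTree T D X) ∈
        {k | TreedepthLE (contractedTree T D X) k} :=
      Nat.sInf_mem ⟨_, exists_treedepthLE _⟩
    rw [ctd] at hctd
    exact hctd ▸ hmem
  have hwin : AttackerWinsIn T t D := good_wins T hT t D X ⟨h1, h2, h3, h5, hne, htd⟩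
  exact sInf_le ⟨t, rfl, hwin⟩
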